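/- arXiv:2303.06646 — 2 statements merged into one kernel-verified Lean document; each statement's English description precedes it below -/
import Mathlib

section
/- Let (M, E) be an exact category and 𝒫 a full additive subcategory of M which is strongly covariantly finite. Then for any morphism f : X → Y in M there exist an object Q ∈ 𝒫 and a conflation 0 → X → Y ⊕ Q → Z → 0 (whose inflation has components f and −α for some 𝒫-preenvelope α : X → Q) which is Hom(−,𝒫)-exact. -/
open CategoryTheory CategoryTheory.Limits

universe v u

namespace PaperQEC

section QuotientCategory

variable {C : Type u} [Category.{v} C] [Preadditive C]

/-- `f` factors through an object belonging to `P`. -/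
def FactorsThru (P : Set C) {X Y : C} (f : X ⟶ Y) : Prop :=
  ∃ Z ∈ P, ∃ (g : X ⟶ Z) (h : Z ⟶ Y), g ≫ h = f

/-- The subgroup of `Hom(X, Y)` generated by morphisms factoring through an object of `P`
(for `P` closed under finite sums this is just the set of such morphisms). -/
def factorIdeal (P : Set C) (X Y : C) : AddSubgroup (X ⟶ Y) :=
  AddSubgroup.closure {f | FactorsThru P f}

lemma factorIdeal_comp_left (P : Set C) {X Y Z : C} {f : X ⟶ Y}
    (hf : f ∈ factorIdeal P X Y) (g : Y ⟶ Z) : f ≫ g ∈ factorIdeal P X Z := by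
  have h : factorIdeal P X Y ≤
      (factorIdeal P X Z).comap (AddMonoidHom.mk' (fun u : X ⟶ Y => u ≫ g)
        (fun a b => Preadditive.add_comp _ _ _ _ _ _)) := by
    refine (AddSubgroup.closure_le _).mpr ?_
    rintro u ⟨Zp, hZp, a, b, rfl⟩
    exact AddSubgroup.mem_comap.mpr
      (AddSubgroup.subset_closure ⟨Zp, hZp, a, b ≫ g, (Category.assoc _ _ _).symm⟩)
  exact h hf

lemma factorIdeal_comp_right (P : Set C) {X Y Z : C} (f : X ⟶ Y) {g : Y ⟶ Z}
    (hg : g ∈ factorIdeal P Y Z) : f ≫ g ∈ factorIdeal P X Z := by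
  have h : factorIdeal P Y Z ≤
      (factorIdeal P X Z).comap (AddMonoidHom.mk' (fun u : Y ⟶ Z => f ≫ u)
        (fun a b => Preadditive.comp_add _ _ _ _ _ _)) := by
    refine (AddSubgroup.closure_le _).mpr ?_
    rintro u ⟨Zp, hZp, a, b, rfl⟩
    exact AddSubgroup.mem_comap.mpr
      (AddSubgroup.subset_closure ⟨Zp, hZp, f ≫ a, b, Category.assoc _ _ _⟩)
  exact h hg

/-- Objects of the quotient (stable) category `C / P`. -/
structure QuotObj (P : Set C) : Type u where
  obj : C

variable (P : Set C)

instance quotCategory : Category.{v} (QuotObj P) where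
  Hom A B := (A.obj ⟶ B.obj) ⧸ factorIdeal P A.obj B.obj
  id A := QuotientAddGroup.mk (𝟙 A.obj)
  comp {A B D} f g :=
    Quotient.liftOn₂ f g (fun a b => QuotientAddGroup.mk (a ≫ b)) (by
      intro a₁ b₁ a₂ b₂ ha hb
      have ha' : -a₁ + a₂ ∈ factorIdeal P A.obj B.obj := QuotientAddGroup.leftRel_apply.mp ha
      have hb' : -b₁ + b₂ ∈ factorIdeal P B.obj D.obj := QuotientAddGroup.leftRel_apply.mp hb
      refine (QuotientAddGroup.eq (s := factorIdeal P A.obj D.obj)).mpr ?_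
      have h1 : (-a₁ + a₂) ≫ b₁ ∈ factorIdeal P A.obj D.obj :=
        factorIdeal_comp_left P ha' b₁
      have h2 : a₂ ≫ (-b₁ + b₂) ∈ factorIdeal P A.obj D.obj :=
        factorIdeal_comp_right P a₂ hb'
      have h3 := AddSubgroup.add_mem _ h1 h2
      have heq : -(a₁ ≫ b₁) + a₂ ≫ b₂ = (-a₁ + a₂) ≫ b₁ + a₂ ≫ (-b₁ + b₂) := by
        simp only [Preadditive.add_comp, Preadditive.comp_add, Preadditive.neg_comp,
          Preadditive.comp_neg]
        abel
      rw [heq]; exact h3)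
  id_comp {A B} f := by
    induction f using Quotient.inductionOn with
    | h a => exact congrArg QuotientAddGroup.mk (Category.id_comp a)
  comp_id {A B} f := by
    induction f using Quotient.inductionOn with
    | h a => exact congrArg QuotientAddGroup.mk (Category.comp_id a)
  assoc {A B D E} f g h := by
    induction f using Quotient.inductionOn with
    | h a =>
    induction g using Quotient.inductionOn with
    | h b =>
    induction h using Quotient.inductionOn with
    | h c => exact congrArg QuotientAddGroup.mk (Category.assoc a b c)

/-- The image in the quotient category of a morphism of `C`. -/
def qmap {X Y : C} (f : X ⟶ Y) : (QuotObj.mk X : QuotObj P) ⟶ QuotObj.mk Y :=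
  QuotientAddGroup.mk f

instance quotPreadditive : Preadditive (QuotObj P) where
  homGroup A B :=
    inferInstanceAs (AddCommGroup ((A.obj ⟶ B.obj) ⧸ factorIdeal P A.obj B.obj))
  add_comp A B D f f' g := by
    induction f using Quotient.inductionOn with
    | h a =>
    induction f' using Quotient.inductionOn with
    | h a' =>
    induction g using Quotient.inductionOn with
    | h b =>
      show QuotientAddGroup.mk ((a + a') ≫ b) =
        QuotientAddGroup.mk (a ≫ b) + QuotientAddGroup.mk (a' ≫ b)
      rw [Preadditive.add_comp]
      rfl
  comp_add A B D f g g' := by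
    induction f using Quotient.inductionOn with
    | h a =>
    induction g using Quotient.inductionOn with
    | h b =>
    induction g' using Quotient.inductionOn with
    | h b' =>
      show QuotientAddGroup.mk (a ≫ (b + b')) =
        QuotientAddGroup.mk (a ≫ b) + QuotientAddGroup.mk (a ≫ b')
      rw [Preadditive.comp_add]
      rfl

end QuotientCategory

section Exact

variable {C : Type u} [Category.{v} C] [Preadditive C]

/-- `k` is a kernel of `f`. -/
def IsKernelOf {K X Y : C} (k : K ⟶ X) (f : X ⟶ Y) : Prop :=
  k ≫ f = 0 ∧ ∀ {T : C} (g : T ⟶ X), g ≫ f = 0 → ∃! t : T ⟶ K, t ≫ k = g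

/-- `c` is a cokernel of `f`. -/
def IsCokernelOf {X Y Q : C} (c : Y ⟶ Q) (f : X ⟶ Y) : Prop :=
  f ≫ c = 0 ∧ ∀ {T : C} (g : Y ⟶ T), f ≫ g = 0 → ∃! t : Q ⟶ T, c ≫ t = g

/-- A class of composable pairs of morphisms (the prospective conflations). -/
abbrev ConfClass (D : Type*) [Category D] :=
  ∀ ⦃X Y Z : D⦄, (X ⟶ Y) → (Y ⟶ Z) → Prop

/-- A Quillen exact structure on an additive category: a class of kernel–cokernel pairs
(conflations), closed under isomorphisms, containing the identities as inflations and
deflations, with inflations and deflations closed under composition, pushouts of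
inflations and pullbacks of deflations existing and being inflations resp. deflations. -/
structure ExactStructure (D : Type u) [Category.{v} D] [Preadditive D] where
  conf : ConfClass D
  ker_of_conf : ∀ {X Y Z : D} {i : X ⟶ Y} {d : Y ⟶ Z}, conf i d → IsKernelOf i d
  coker_of_conf : ∀ {X Y Z : D} {i : X ⟶ Y} {d : Y ⟶ Z}, conf i d → IsCokernelOf d i
  isoClosed : ∀ {X Y Z X' Y' Z' : D} {i : X ⟶ Y} {d : Y ⟶ Z} {i' : X' ⟶ Y'} {d' : Y' ⟶ Z'}
    (eX : X ≅ X') (eY : Y ≅ Y') (eZ : Z ≅ Z'),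
    i ≫ eY.hom = eX.hom ≫ i' → d ≫ eZ.hom = eY.hom ≫ d' → conf i d → conf i' d'
  id_isInflation : ∀ X : D, ∃ (Z : D) (d : X ⟶ Z), conf (𝟙 X) d
  id_isDeflation : ∀ X : D, ∃ (W : D) (i : W ⟶ X), conf i (𝟙 X)
  infl_comp : ∀ {X Y Z : D} (i : X ⟶ Y) (j : Y ⟶ Z),
    (∃ (W : D) (d : Y ⟶ W), conf i d) → (∃ (W : D) (d : Z ⟶ W), conf j d) →
    ∃ (W : D) (d : Z ⟶ W), conf (i ≫ j) d
  defl_comp : ∀ {X Y Z : D} (p : X ⟶ Y) (q : Y ⟶ Z),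
    (∃ (W : D) (i : W ⟶ X), conf i p) → (∃ (W : D) (i : W ⟶ Y), conf i q) →
    ∃ (W : D) (i : W ⟶ X), conf i (p ≫ q)
  infl_pushout : ∀ {X Y : D} (i : X ⟶ Y), (∃ (W : D) (d : Y ⟶ W), conf i d) →
    ∀ {A : D} (f : X ⟶ A), ∃ (B : D) (i' : A ⟶ B) (g : Y ⟶ B),
      (∃ (W : D) (d : B ⟶ W), conf i' d) ∧ IsPushout i f g i'
  defl_pullback : ∀ {Y Z : D} (p : Y ⟶ Z), (∃ (W : D) (i : W ⟶ Y), conf i p) →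
    ∀ {B : D} (f : B ⟶ Z), ∃ (A : D) (p' : A ⟶ B) (g : A ⟶ Y),
      (∃ (W : D) (i : W ⟶ A), conf i p') ∧ IsPullback g p' p f

/-- `i` is an inflation, i.e. the first map of some conflation. -/
def IsInflation (E : ConfClass C) {X Y : C} (i : X ⟶ Y) : Prop :=
  ∃ (Z : C) (d : Y ⟶ Z), E i d

/-- `d` is a deflation, i.e. the second map of some conflation. -/
def IsDeflation (E : ConfClass C) {Y Z : C} (d : Y ⟶ Z) : Prop :=
  ∃ (X : C) (i : X ⟶ Y), E i d

/-- `P` is a full additive subcategory: nonempty, closed under isomorphisms,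
finite sums and summands. -/
structure IsAddSubcat [HasBinaryBiproducts C] (P : Set C) : Prop where
  nonempty : P.Nonempty
  isoClosed : ∀ {X Y : C}, (X ≅ Y) → X ∈ P → Y ∈ P
  sumClosed : ∀ {X Y : C}, X ∈ P → Y ∈ P → (X ⊞ Y) ∈ P
  summandClosed : ∀ {X Y : C} (s : X ⟶ Y) (r : Y ⟶ X), s ≫ r = 𝟙 X → Y ∈ P → X ∈ P

/-- `f : Q ⟶ X` is a `P`-precover of `X`. -/
def IsPrecover (P : Set C) {Q X : C} (f : Q ⟶ X) : Prop :=
  Q ∈ P ∧ ∀ (Q' : C), Q' ∈ P → ∀ g : Q' ⟶ X, ∃ h : Q' ⟶ Q, h ≫ f = g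

/-- `f : X ⟶ Q` is a `P`-preenvelope of `X`. -/
def IsPreenvelope (P : Set C) {X Q : C} (f : X ⟶ Q) : Prop :=
  Q ∈ P ∧ ∀ (Q' : C), Q' ∈ P → ∀ g : X ⟶ Q', ∃ h : Q ⟶ Q', f ≫ h = g

/-- `P` is strongly contravariantly finite: every object has a `P`-precover
which is a deflation. -/
def StronglyContraFinite (E : ConfClass C) (P : Set C) : Prop :=
  ∀ X : C, ∃ (Q : C) (f : Q ⟶ X), IsPrecover P f ∧ IsDeflation E f

/-- `P` is strongly covariantly finite: every object has a `P`-preenvelope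
which is an inflation. -/
def StronglyCovFinite (E : ConfClass C) (P : Set C) : Prop :=
  ∀ X : C, ∃ (Q : C) (f : X ⟶ Q), IsPreenvelope P f ∧ IsInflation E f

/-- The pair `(i, d)` is `Hom(P,-)`-exact: for every `Q ∈ P`, the sequence
`0 → Hom(Q,X) → Hom(Q,Y) → Hom(Q,Z) → 0` is exact. -/
def HomCovExact (P : Set C) {X Y Z : C} (i : X ⟶ Y) (d : Y ⟶ Z) : Prop :=
  ∀ Q : C, Q ∈ P →
    (∀ g : Q ⟶ X, g ≫ i = 0 → g = 0) ∧
    (∀ u : Q ⟶ Y, u ≫ d = 0 → ∃ g : Q ⟶ X, g ≫ i = u) ∧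
    (∀ h : Q ⟶ Z, ∃ u : Q ⟶ Y, u ≫ d = h)

/-- The pair `(i, d)` is `Hom(-,P)`-exact: for every `Q ∈ P`, the sequence
`0 → Hom(Z,Q) → Hom(Y,Q) → Hom(X,Q) → 0` is exact. -/
def HomContraExact (P : Set C) {X Y Z : C} (i : X ⟶ Y) (d : Y ⟶ Z) : Prop :=
  ∀ Q : C, Q ∈ P →
    (∀ g : Z ⟶ Q, d ≫ g = 0 → g = 0) ∧
    (∀ u : Y ⟶ Q, i ≫ u = 0 → ∃ g : Z ⟶ Q, d ≫ g = u) ∧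
    (∀ h : X ⟶ Q, ∃ u : Y ⟶ Q, i ≫ u = h)

/-- Condition (▲): `P` is strongly covariantly finite and every `X` admits a conflation
`0 → X → Q₀ → Q₁ → 0` with `Q₀, Q₁ ∈ P` whose inflation is a `P`-preenvelope. -/
def CondEnv (E : ConfClass C) (P : Set C) : Prop :=
  StronglyCovFinite E P ∧
  ∀ X : C, ∃ (Q₀ Q₁ : C) (α : X ⟶ Q₀) (q : Q₀ ⟶ Q₁),
    E α q ∧ Q₀ ∈ P ∧ Q₁ ∈ P ∧ IsPreenvelope P α

/-- Condition (▼): `P` is strongly contravariantly finite and every `X` admits a conflation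
`0 → P₁ → P₀ → X → 0` with `P₀, P₁ ∈ P` whose deflation is a `P`-precover. -/
def CondCov (E : ConfClass C) (P : Set C) : Prop :=
  StronglyContraFinite E P ∧
  ∀ X : C, ∃ (P₀ P₁ : C) (i : P₁ ⟶ P₀) (β : P₀ ⟶ X),
    E i β ∧ P₀ ∈ P ∧ P₁ ∈ P ∧ IsPrecover P β

/-- `P` is a pseudo-cluster tilting subcategory. -/
def PseudoClusterTilting (E : ConfClass C) (P : Set C) : Prop :=
  CondEnv E P ∧ CondCov E P

/-- The conflation `(i, d)` splits. -/
def Splits {X Y Z : C} (i : X ⟶ Y) (d : Y ⟶ Z) : Prop :=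
  (∃ r : Y ⟶ X, i ≫ r = 𝟙 X) ∧ ∃ s : Z ⟶ Y, s ≫ d = 𝟙 Z

/-- `P` is self-orthogonal with respect to the class `cl` of conflations: every
conflation in `cl` with both end terms in `P` splits. -/
def SelfOrthWrt (P : Set C) (cl : ConfClass C) : Prop :=
  ∀ ⦃X Y Z : C⦄ (i : X ⟶ Y) (d : Y ⟶ Z), cl i d → X ∈ P → Z ∈ P → Splits i d

/-- `P` is a cluster tilting subcategory: a pseudo-cluster tilting subcategory which is
self-orthogonal with respect to all conflations. -/
def ClusterTilting (E : ConfClass C) (P : Set C) : Prop :=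
  PseudoClusterTilting E P ∧ SelfOrthWrt P E

/-- The class `𝒮` of conflations. -/
def memS (E : ConfClass C) (P : Set C) ⦃S₁ S₂ S₃ : C⦄ (i : S₁ ⟶ S₂) (d : S₂ ⟶ S₃) : Prop :=
  E i d ∧ ∃ (U M₁ M₂ : C) (u₁ : U ⟶ S₁) (p₁ : S₁ ⟶ M₁) (u₂ : U ⟶ S₂) (p₂ : S₂ ⟶ M₂)
    (m : M₁ ⟶ M₂) (q : M₂ ⟶ S₃),
    E u₁ p₁ ∧ E u₂ p₂ ∧ E m q ∧
    HomCovExact P u₂ p₂ ∧ HomContraExact P m q ∧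
    u₁ ≫ i = u₂ ∧ i ≫ p₂ = p₁ ≫ m ∧ d = p₂ ≫ q

/-- The class `𝒯` of conflations. -/
def memT (E : ConfClass C) (P : Set C) ⦃T₁ T₂ T₃ : C⦄ (i : T₁ ⟶ T₂) (d : T₂ ⟶ T₃) : Prop :=
  E i d ∧ ∃ (V N₂ N₃ : C) (n₁ : T₁ ⟶ N₂) (n₂ : N₂ ⟶ N₃) (j₂ : N₂ ⟶ T₂) (v₂ : T₂ ⟶ V)
    (j₃ : N₃ ⟶ T₃) (v₃ : T₃ ⟶ V),
    E n₁ n₂ ∧ E j₂ v₂ ∧ E j₃ v₃ ∧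
    HomCovExact P n₁ n₂ ∧ HomContraExact P j₂ v₂ ∧
    i = n₁ ≫ j₂ ∧ n₂ ≫ j₃ = j₂ ≫ d ∧ d ≫ v₃ = v₂

end Exact

section AbelianDefs

/-- A preadditive category is abelian (in the sense of Definition 2.1 of the paper) if it
has kernels and cokernels and the canonical morphism from the coimage to the image of any
morphism is an isomorphism. -/
def IsAbelianCat (D : Type*) [Category D] [Preadditive D] : Prop :=
  ∃ (hk : HasKernels D) (hc : HasCokernels D),
    ∀ {X Y : D} (f : X ⟶ Y),
      letI := hk; letI := hc; IsIso (CategoryTheory.Abelian.coimageImageComparison f)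

/-- A preadditive category is semi-abelian if it has kernels and cokernels and the
canonical morphism from the coimage to the image of any morphism is both an epimorphism
and a monomorphism. -/
def IsSemiAbelianCat (D : Type*) [Category D] [Preadditive D] : Prop :=
  ∃ (hk : HasKernels D) (hc : HasCokernels D),
    ∀ {X Y : D} (f : X ⟶ Y),
      letI := hk; letI := hc; Mono (CategoryTheory.Abelian.coimageImageComparison f) ∧
      Epi (CategoryTheory.Abelian.coimageImageComparison f)

end AbelianDefs

section ConflationCategory

variable {M : Type u} [Category.{v} M] [Preadditive M]

/-- Objects of the category `E(M)` of conflations: conflations `0 → X₁ → X₂ → X₃ → 0`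
of the exact category `(M, E)`. -/
structure ConfObj (E : ExactStructure M) : Type max u v where
  X₁ : M
  X₂ : M
  X₃ : M
  i : X₁ ⟶ X₂
  d : X₂ ⟶ X₃
  conf : E.conf i d

variable {E : ExactStructure M}

/-- The additive group of morphisms of conflations: triples of morphisms making the two
squares commute. -/
def confHomGroup (A B : ConfObj E) :
    AddSubgroup ((A.X₁ ⟶ B.X₁) × (A.X₂ ⟶ B.X₂) × (A.X₃ ⟶ B.X₃)) where
  carrier := {t | A.i ≫ t.2.1 = t.1 ≫ B.i ∧ A.d ≫ t.2.2 = t.2.1 ≫ B.d}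
  zero_mem' := by simp
  add_mem' := by
    rintro a b ⟨ha₁, ha₂⟩ ⟨hb₁, hb₂⟩
    refine ⟨?_, ?_⟩ <;>
      simp [Preadditive.comp_add, Preadditive.add_comp, ha₁, ha₂, hb₁, hb₂]
  neg_mem' := by
    rintro a ⟨h₁, h₂⟩
    refine ⟨?_, ?_⟩ <;> simp [h₁, h₂]

instance confCategoryStruct : CategoryStruct.{v} (ConfObj E) where
  Hom A B := ↥(confHomGroup A B)
  id A := ⟨(𝟙 _, 𝟙 _, 𝟙 _), by constructor <;> simp⟩
  comp {A B D} f g := ⟨(f.1.1 ≫ g.1.1, f.1.2.1 ≫ g.1.2.1, f.1.2.2 ≫ g.1.2.2), by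
    obtain ⟨hf₁, hf₂⟩ := f.2
    obtain ⟨hg₁, hg₂⟩ := g.2
    constructor
    · rw [← Category.assoc, hf₁, Category.assoc, hg₁, ← Category.assoc]
    · rw [← Category.assoc, hf₂, Category.assoc, hg₂, ← Category.assoc]⟩

/-- Degree `-1` component of a morphism of conflations. -/
def homC₁ {A B : ConfObj E} (f : A ⟶ B) : A.X₁ ⟶ B.X₁ := f.1.1

/-- Degree `0` component of a morphism of conflations. -/
def homC₂ {A B : ConfObj E} (f : A ⟶ B) : A.X₂ ⟶ B.X₂ := f.1.2.1

/-- Degree `1` component of a morphism of conflations. -/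
def homC₃ {A B : ConfObj E} (f : A ⟶ B) : A.X₃ ⟶ B.X₃ := f.1.2.2

lemma confHom_ext {A B : ConfObj E} {f g : A ⟶ B} (h₁ : homC₁ f = homC₁ g)
    (h₂ : homC₂ f = homC₂ g) (h₃ : homC₃ f = homC₃ g) : f = g := by
  apply Subtype.ext
  show (homC₁ f, homC₂ f, homC₃ f) = (homC₁ g, homC₂ g, homC₃ g)
  rw [h₁, h₂, h₃]

@[simp] lemma homC₁_id (A : ConfObj E) : homC₁ (𝟙 A) = 𝟙 A.X₁ := rfl
@[simp] lemma homC₂_id (A : ConfObj E) : homC₂ (𝟙 A) = 𝟙 A.X₂ := rfl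
@[simp] lemma homC₃_id (A : ConfObj E) : homC₃ (𝟙 A) = 𝟙 A.X₃ := rfl
@[simp] lemma homC₁_comp {A B D : ConfObj E} (f : A ⟶ B) (g : B ⟶ D) :
    homC₁ (f ≫ g) = homC₁ f ≫ homC₁ g := rfl
@[simp] lemma homC₂_comp {A B D : ConfObj E} (f : A ⟶ B) (g : B ⟶ D) :
    homC₂ (f ≫ g) = homC₂ f ≫ homC₂ g := rfl
@[simp] lemma homC₃_comp {A B D : ConfObj E} (f : A ⟶ B) (g : B ⟶ D) :
    homC₃ (f ≫ g) = homC₃ f ≫ homC₃ g := rfl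

instance confCategory : Category.{v} (ConfObj E) where
  id_comp f := confHom_ext (by simp) (by simp) (by simp)
  comp_id f := confHom_ext (by simp) (by simp) (by simp)
  assoc f g h := confHom_ext (by simp) (by simp) (by simp)

instance confHomAddCommGroup (A B : ConfObj E) : AddCommGroup (A ⟶ B) :=
  inferInstanceAs (AddCommGroup ↥(confHomGroup A B))

@[simp] lemma homC₁_add {A B : ConfObj E} (f g : A ⟶ B) :
    homC₁ (f + g) = homC₁ f + homC₁ g := rfl
@[simp] lemma homC₂_add {A B : ConfObj E} (f g : A ⟶ B) :
    homC₂ (f + g) = homC₂ f + homC₂ g := rfl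
@[simp] lemma homC₃_add {A B : ConfObj E} (f g : A ⟶ B) :
    homC₃ (f + g) = homC₃ f + homC₃ g := rfl

instance confPreadditive : Preadditive (ConfObj E) where
  homGroup A B := inferInstance
  add_comp A B D f f' g :=
    confHom_ext (by simp [Preadditive.add_comp]) (by simp [Preadditive.add_comp])
      (by simp [Preadditive.add_comp])
  comp_add A B D f g g' :=
    confHom_ext (by simp [Preadditive.comp_add]) (by simp [Preadditive.comp_add])
      (by simp [Preadditive.comp_add])

/-- The degree-wise class of conflations on `E(M)`: a short sequence of conflations is a
conflation if it is a conflation of `M` in each degree. -/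
def degConf (E : ExactStructure M) : ConfClass (ConfObj E) := fun _ _ _ f g =>
  E.conf (homC₁ f) (homC₁ g) ∧ E.conf (homC₂ f) (homC₂ g) ∧ E.conf (homC₃ f) (homC₃ g)

/-- The class `E₀`: degree-wise conflations splitting in degree `0`. -/
def degConf₀ (E : ExactStructure M) : ConfClass (ConfObj E) := fun _ _ _ f g =>
  degConf E f g ∧ Splits (homC₂ f) (homC₂ g)

/-- The class `E₀⁻¹`: degree-wise conflations splitting in degrees `-1` and `0`. -/
def degConf₀neg (E : ExactStructure M) : ConfClass (ConfObj E) := fun _ _ _ f g =>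
  degConf E f g ∧ Splits (homC₁ f) (homC₁ g) ∧ Splits (homC₂ f) (homC₂ g)

/-- The class `E₀¹`: degree-wise conflations splitting in degrees `0` and `1`. -/
def degConf₀pos (E : ExactStructure M) : ConfClass (ConfObj E) := fun _ _ _ f g =>
  degConf E f g ∧ Splits (homC₂ f) (homC₂ g) ∧ Splits (homC₃ f) (homC₃ g)

/-- The full subcategory `S(M)` of `E(M)` consisting of the split conflations. -/
def splitObjs (E : ExactStructure M) : Set (ConfObj E) :=
  {A | Splits A.i A.d}

end ConflationCategory


section Aux

variable {M : Type u} [Category.{v} M] [Preadditive M] [HasBinaryBiproducts M]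

/-- Conflations are stable under postcomposing the inflation with an isomorphism. -/
lemma conf_comp_iso (E : ExactStructure M) {X Y Y' Z : M} {i : X ⟶ Y} {d : Y ⟶ Z}
    (hc : E.conf i d) (e : Y ≅ Y') : E.conf (i ≫ e.hom) (e.inv ≫ d) :=
  E.isoClosed (Iso.refl X) e (Iso.refl Z) (by simp) (by simp) hc

lemma isInflation_comp_iso (E : ExactStructure M) {X Y Y' : M} {i : X ⟶ Y}
    (h : IsInflation E.conf i) (e : Y ≅ Y') : IsInflation E.conf (i ≫ e.hom) := by
  obtain ⟨Z, d, hc⟩ := h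
  exact ⟨Z, e.inv ≫ d, conf_comp_iso E hc e⟩

lemma isInflation_neg (E : ExactStructure M) {X Q : M} {α : X ⟶ Q}
    (h : IsInflation E.conf α) : IsInflation E.conf (-α) := by
  obtain ⟨Z, d, hc⟩ := h
  exact ⟨Z, d, E.isoClosed (⟨-𝟙 X, -𝟙 X, by simp, by simp⟩ : X ≅ X) (Iso.refl Q)
    (Iso.refl Z) (by simp) (by simp) hc⟩

/-- The canonical pushout square showing `X⊞Y` is the pushout of two zero maps. -/
lemma isPushout_zero_zero (W X Y : M) :
    IsPushout (0 : W ⟶ Y) (0 : W ⟶ X) (biprod.inr : Y ⟶ X ⊞ Y) biprod.inl := by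
  refine IsPushout.of_isColimit (PushoutCocone.IsColimit.mk (by simp)
    (fun s => biprod.desc s.inr s.inl) (fun s => by simp) (fun s => by simp) ?_)
  intro s m h1 h2
  apply biprod.hom_ext' <;> simp [h1, h2]

/-- `β ⊞ 𝟙` is the pushout of `β` along `biprod.inl`. -/
lemma isPushout_map_one {X Q : M} (β : X ⟶ Q) (Y : M) :
    IsPushout β (biprod.inl : X ⟶ X ⊞ Y) (biprod.inl : Q ⟶ Q ⊞ Y)
      (biprod.map β (𝟙 Y)) := by
  have heq : β ≫ (biprod.inl : Q ⟶ Q ⊞ Y) = biprod.inl ≫ biprod.map β (𝟙 Y) :=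
    (biprod.inl_map β (𝟙 Y)).symm
  refine IsPushout.of_isColimit (PushoutCocone.IsColimit.mk heq
    (fun s => biprod.desc s.inl (biprod.inr ≫ s.inr)) (fun s => by simp) ?_ ?_)
  · intro s
    apply biprod.hom_ext' <;> simp [reassoc_of% s.condition, s.condition]
  · intro s m h1 h2
    apply biprod.hom_ext'
    · simpa using h1
    · have h3 : biprod.inr ≫ biprod.map β (𝟙 Y) ≫ m = biprod.inr ≫ s.inr := by
        rw [h2]
      simpa using h3

lemma isInflation_inl (E : ExactStructure M) (X Y : M) :
    IsInflation E.conf (biprod.inl : X ⟶ X ⊞ Y) := by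
  obtain ⟨W, j, hj⟩ := E.id_isDeflation Y
  have hj0 : j = 0 := by
    have := (E.ker_of_conf hj).1
    simpa using this
  obtain ⟨B, i1, g1, hinfl, hpo⟩ := E.infl_pushout j ⟨Y, 𝟙 Y, hj⟩ (0 : W ⟶ X)
  rw [hj0] at hpo
  rw [← IsPushout.inr_isoIsPushout_hom (h := hpo) (h' := isPushout_zero_zero W X Y)]
  exact isInflation_comp_iso E hinfl _

lemma isInflation_map_one (E : ExactStructure M) {X Q : M} {β : X ⟶ Q}
    (hβ : IsInflation E.conf β) (Y : M) :
    IsInflation E.conf (biprod.map β (𝟙 Y)) := by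
  obtain ⟨B, i2, g2, hinfl2, hpo⟩ := E.infl_pushout β hβ (biprod.inl : X ⟶ X ⊞ Y)
  rw [← IsPushout.inr_isoIsPushout_hom (h := hpo) (h' := isPushout_map_one β Y)]
  exact isInflation_comp_iso E hinfl2 _

/-- The "shear" isomorphism of `X ⊞ Y`. -/
noncomputable def shearIso (X Y : M) (f : X ⟶ Y) : (X ⊞ Y : M) ≅ X ⊞ Y where
  hom := biprod.desc (biprod.lift (𝟙 X) f) biprod.inr
  inv := biprod.desc (biprod.lift (𝟙 X) (-f)) biprod.inr
  hom_inv_id := by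
    apply biprod.hom_ext' <;> apply biprod.hom_ext <;> simp
  inv_hom_id := by
    apply biprod.hom_ext' <;> apply biprod.hom_ext <;> simp

lemma isInflation_lift_one (E : ExactStructure M) {X Y : M} (f : X ⟶ Y) :
    IsInflation E.conf (biprod.lift (𝟙 X) f) := by
  have : biprod.lift (𝟙 X) f = biprod.inl ≫ (shearIso X Y f).hom := by
    simp [shearIso]
  rw [this]
  exact isInflation_comp_iso E (isInflation_inl E X Y) (shearIso X Y f)

lemma isInflation_lift (E : ExactStructure M) {X Y Q : M} (f : X ⟶ Y) {β : X ⟶ Q}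
    (hβ : IsInflation E.conf β) :
    IsInflation E.conf (biprod.lift f β : X ⟶ Y ⊞ Q) := by
  have h1 : IsInflation E.conf (biprod.lift (𝟙 X) f ≫ biprod.map β (𝟙 Y)) :=
    E.infl_comp _ _ (isInflation_lift_one E f) (isInflation_map_one E hβ Y)
  have h2 : biprod.lift (𝟙 X) f ≫ biprod.map β (𝟙 Y) = biprod.lift β f := by
    apply biprod.hom_ext <;> simp
  rw [h2] at h1
  have h3 : biprod.lift β f ≫ (biprod.braiding Q Y).hom = biprod.lift f β := by
    apply biprod.hom_ext <;> simp
  rw [← h3]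
  exact isInflation_comp_iso E h1 (biprod.braiding Q Y)

end Aux

/-- if `𝒫` is strongly covariantly finite, every morphism `f : X ⟶ Y` fits
into a conflation `0 → X → Y ⊕ Q → Z → 0` (with inflation of components `f` and `-α` for
a `𝒫`-preenvelope `α`) which is `Hom(-,𝒫)`-exact. -/
theorem exists_homContraExact_conflation {M : Type u} [Category.{v} M] [Preadditive M]
    [HasBinaryBiproducts M] (E : ExactStructure M) (P : Set M) (hP : IsAddSubcat P)
    (hcov : StronglyCovFinite E.conf P) {X Y : M} (f : X ⟶ Y) :
    ∃ (Q Z : M), Q ∈ P ∧ ∃ (α : X ⟶ Q), IsPreenvelope P α ∧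
      ∃ (d : Y ⊞ Q ⟶ Z), E.conf (biprod.lift f (-α)) d ∧
        HomContraExact P (biprod.lift f (-α)) d := by
  obtain ⟨Q, α, hpre, hinfl⟩ := hcov X
  have hβ : IsInflation E.conf (-α) := isInflation_neg E hinfl
  obtain ⟨Z, d, hconf⟩ := isInflation_lift E f hβ
  refine ⟨Q, Z, hpre.1, α, hpre, d, hconf, ?_⟩
  intro R hR
  have coker := E.coker_of_conf hconf
  refine ⟨?_, ?_, ?_⟩
  · intro g hg
    obtain ⟨t, ht, huniq⟩ := coker.2 (0 : Y ⊞ Q ⟶ R) (by simp)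
    rw [huniq g hg, huniq 0 (by simp)]
  · intro u hu
    obtain ⟨g, hg, _⟩ := coker.2 u hu
    exact ⟨g, hg⟩
  · intro h
    obtain ⟨t, ht⟩ := hpre.2 R hR h
    refine ⟨biprod.desc 0 (-t), ?_⟩
    rw [biprod.lift_desc]
    simp [ht]

end PaperQEC
end

section
/- Let (M, E) be an exact category and 𝒫 a full additive subcategory of M satisfying condition (▲). Then the quotient category M/𝒫 has cokernels: every morphism of M/𝒫 admits a cokernel. -/
open CategoryTheory CategoryTheory.Limits

universe v u

namespace PaperQEC

section CokerAux

variable {C : Type u} [Category.{v} C] [Preadditive C]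

lemma factorsThru_mem_factorIdeal (P : Set C) {X Y : C} {f : X ⟶ Y}
    (hf : FactorsThru P f) : f ∈ factorIdeal P X Y :=
  AddSubgroup.subset_closure hf

lemma factorsThru_of_mem_factorIdeal [HasBinaryBiproducts C] {P : Set C}
    (hP : IsAddSubcat P) {X Y : C} {f : X ⟶ Y} (hf : f ∈ factorIdeal P X Y) :
    FactorsThru P f := by
  let S : AddSubgroup (X ⟶ Y) :=
    { carrier := {u | FactorsThru P u}
      zero_mem' := by
        obtain ⟨Z, hZ⟩ := hP.nonempty
        exact ⟨Z, hZ, 0, 0, by simp⟩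
      add_mem' := by
        rintro a b ⟨Z₁, hZ₁, a₁, b₁, rfl⟩ ⟨Z₂, hZ₂, a₂, b₂, rfl⟩
        exact ⟨Z₁ ⊞ Z₂, hP.sumClosed hZ₁ hZ₂, biprod.lift a₁ a₂, biprod.desc b₁ b₂,
          by rw [biprod.lift_desc]⟩
      neg_mem' := by
        rintro a ⟨Z, hZ, a₁, b₁, rfl⟩
        exact ⟨Z, hZ, -a₁, b₁, by simp⟩ }
  exact (AddSubgroup.closure_le S).mpr (fun u hu => hu) hf

lemma qmap_comp (P : Set C) {X Y Z : C} (a : X ⟶ Y) (b : Y ⟶ Z) :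
    qmap P a ≫ qmap P b = qmap P (a ≫ b) := rfl

lemma qmap_eq_zero (P : Set C) {X Y : C} {a : X ⟶ Y} (h : a ∈ factorIdeal P X Y) :
    qmap P a = 0 := (QuotientAddGroup.eq_zero_iff a).mpr h

end CokerAux

/-- if `𝒫` satisfies condition (▲), the quotient category `M/𝒫` has
cokernels. -/
theorem quotient_hasCokernels {M : Type u} [Category.{v} M] [Preadditive M]
    [HasBinaryBiproducts M] (E : ExactStructure M) (P : Set M) (hP : IsAddSubcat P)
    (h : CondEnv E.conf P) :
    HasCokernels (QuotObj P) := by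
  constructor
  intro A B φ
  induction φ using Quotient.inductionOn with
  | h f =>
  show HasCokernel (qmap P f : QuotObj.mk A.obj ⟶ QuotObj.mk B.obj)
  -- the conflation `0 → A.obj → Q₀ → Q₁ → 0` from condition (▲)
  obtain ⟨Q₀, Q₁, α, q, hconf, hQ₀, hQ₁, hpre⟩ := h.2 A.obj
  -- push out the inflation `α` along `f`
  obtain ⟨Bo, i', g, _, hpo⟩ := E.infl_pushout α ⟨Q₁, q, hconf⟩ f
  have hαq : α ≫ q = 0 := (E.coker_of_conf hconf).1
  have w : qmap P f ≫ qmap P i' = 0 := by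
    rw [qmap_comp]
    exact qmap_eq_zero P (factorsThru_mem_factorIdeal P ⟨Q₀, hQ₀, α, g, hpo.w⟩)
  -- existence of factorizations
  have key : ∀ (T : QuotObj P) (gq : QuotObj.mk B.obj ⟶ T),
      qmap P f ≫ gq = 0 →
      ∃ m : (QuotObj.mk Bo : QuotObj P) ⟶ T, qmap P i' ≫ m = gq := by
    intro T gq hg
    induction gq using Quotient.inductionOn with
    | h g₀ =>
    have hg' : f ≫ g₀ ∈ factorIdeal P A.obj T.obj := by
      have : qmap P (f ≫ g₀) = 0 := by rw [← qmap_comp]; exact hg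
      exact (QuotientAddGroup.eq_zero_iff _).mp this
    obtain ⟨Z, hZ, a, b, hab⟩ := factorsThru_of_mem_factorIdeal hP hg'
    obtain ⟨h₀, hh₀⟩ := hpre.2 Z hZ a
    refine ⟨qmap P (hpo.desc (h₀ ≫ b) g₀ (by rw [← Category.assoc, hh₀, hab])), ?_⟩
    rw [qmap_comp, hpo.inr_desc]
    rfl
  -- `qmap P i'` is an epimorphism in the quotient category
  have epi : ∀ (T : QuotObj P) (m₁ m₂ : (QuotObj.mk Bo : QuotObj P) ⟶ T),
      qmap P i' ≫ m₁ = qmap P i' ≫ m₂ → m₁ = m₂ := by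
    intro T m₁ m₂ hm
    induction m₁ using Quotient.inductionOn with
    | h t₁ =>
    induction m₂ using Quotient.inductionOn with
    | h t₂ =>
    have hmem : i' ≫ (-t₁ + t₂) ∈ factorIdeal P B.obj T.obj := by
      have hm' : qmap P (i' ≫ t₁) = qmap P (i' ≫ t₂) := by
        rw [← qmap_comp, ← qmap_comp]; exact hm
      have := QuotientAddGroup.leftRel_apply.mp (Quotient.exact hm')
      simpa [Preadditive.comp_add, Preadditive.comp_neg] using this
    set t : Bo ⟶ T.obj := -t₁ + t₂ with ht
    obtain ⟨Z, hZ, u, v, huv⟩ := factorsThru_of_mem_factorIdeal hP hmem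
    -- extend `u : B.obj ⟶ Z` along `i'` using the pushout and the preenvelope
    obtain ⟨h₁, hh₁⟩ := hpre.2 Z hZ (f ≫ u)
    set uext : Bo ⟶ Z := hpo.desc h₁ u hh₁ with huext
    have hiu : i' ≫ uext = u := hpo.inr_desc _ _ _
    set s : Bo ⟶ T.obj := t - uext ≫ v with hs
    have his : i' ≫ s = 0 := by
      rw [hs, Preadditive.comp_sub, ← Category.assoc, hiu, huv, sub_self]
    -- the map `Bo ⟶ Q₁` induced by the pushout
    have hw₂ : α ≫ q = f ≫ (0 : B.obj ⟶ Q₁) := by rw [hαq, Limits.comp_zero]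
    set d₂ : Bo ⟶ Q₁ := hpo.desc q 0 hw₂ with hd₂
    have hgd₂ : g ≫ d₂ = q := hpo.inl_desc _ _ _
    have hid₂ : i' ≫ d₂ = 0 := hpo.inr_desc _ _ _
    -- `g ≫ s` kills `α`, hence factors through `q`
    have hgs : α ≫ (g ≫ s) = 0 := by
      rw [← Category.assoc, hpo.w, Category.assoc, his, Limits.comp_zero]
    obtain ⟨r, hr, -⟩ := (E.coker_of_conf hconf).2 (g ≫ s) hgs
    have hsr : d₂ ≫ r = s := by
      apply hpo.hom_ext
      · rw [← Category.assoc, hgd₂, hr]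
      · rw [← Category.assoc, hid₂, Limits.zero_comp, his]
    have hmemt : t ∈ factorIdeal P Bo T.obj := by
      have h1 : (uext ≫ v) ∈ factorIdeal P Bo T.obj :=
        factorsThru_mem_factorIdeal P ⟨Z, hZ, uext, v, rfl⟩
      have h2 : s ∈ factorIdeal P Bo T.obj :=
        factorsThru_mem_factorIdeal P ⟨Q₁, hQ₁, d₂, r, hsr⟩
      have hts : t = uext ≫ v + s := by rw [hs]; abel
      rw [hts]; exact AddSubgroup.add_mem _ h1 h2
    exact Quotient.sound (QuotientAddGroup.leftRel_apply.mpr hmemt)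
  exact HasColimit.mk ⟨CokernelCofork.ofπ (qmap P i') w, CokernelCofork.IsColimit.ofπ _ w
    (fun {T} gq hg => (key T gq hg).choose)
    (fun {T} gq hg => (key T gq hg).choose_spec)
    (fun {T} gq hg m hm => epi T m _ (hm.trans (key T gq hg).choose_spec.symm))⟩
end PaperQEC
end
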